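/- arXiv:1103.4984 — 2 statements merged into one kernel-verified Lean document; each statement's English description precedes it below -/
import Mathlib

section
/- Let Φ be an n×N complex matrix whose columns u₁,…,u_N are unit vectors with coherence μ = max_{i≠j} |⟨u_i, u_j⟩|. Then Φ satisfies the restricted isometry property of order k with parameter δ = (k−1)μ; that is, for every k-sparse vector x ∈ ℂ^N, (1−(k−1)μ)‖x‖² ≤ ‖Φx‖² ≤ (1+(k−1)μ)‖x‖². -/
/-- `x` is `k`-sparse: it has at most `k` nonzero coordinates. -/
def Sparse {N : Type*} [Fintype N] (k : ℕ) (x : N → ℂ) : Prop :=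
  ∃ S : Finset N, S.card ≤ k ∧ ∀ i ∉ S, x i = 0

/-- `Φ` satisfies the restricted isometry property of order `k` with parameter `δ`. -/
def RIP {n N : Type*} [Fintype n] [Fintype N] (Φ : Matrix n N ℂ) (k : ℕ) (δ : ℝ) : Prop :=
  ∀ x : N → ℂ, Sparse k x →
    (1 - δ) * ∑ i, ‖x i‖ ^ 2 ≤ ∑ j, ‖Φ.mulVec x j‖ ^ 2 ∧
    ∑ j, ‖Φ.mulVec x j‖ ^ 2 ≤ (1 + δ) * ∑ i, ‖x i‖ ^ 2

lemma conj_mul_self (z : ℂ) : ((‖z‖ : ℂ))^2 = (starRingEnd ℂ) z * z := by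
  rw [mul_comm, Complex.mul_conj]
  norm_cast
  rw [Complex.normSq_eq_norm_sq]

set_option maxHeartbeats 1000000 in
theorem stmt0 (n N : ℕ) (Φ : Matrix (Fin n) (Fin N) ℂ) (k : ℕ) (μ : ℝ)
    (hunit : ∀ j, ∑ i, ‖Φ i j‖ ^ 2 = 1)
    (hμ : IsGreatest
      {r : ℝ | ∃ i j : Fin N, i ≠ j ∧ r = ‖∑ l, (starRingEnd ℂ) (Φ l i) * Φ l j‖} μ) :
    RIP Φ k (((k : ℝ) - 1) * μ) := by
  obtain ⟨⟨i₀, j₀, hij₀, hμeq⟩, hub⟩ := hμ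
  have hμ0 : 0 ≤ μ := hμeq ▸ norm_nonneg _
  intro x hx
  obtain ⟨S, hScard, hS⟩ := hx
  set a : Fin N → ℝ := fun i => ‖x i‖ with ha
  set E : ℝ := ∑ i, ‖x i‖ ^ 2 with hE
  set G : Fin N → Fin N → ℂ := fun i j => ∑ l, (starRingEnd ℂ) (Φ l i) * Φ l j with hG
  have hE' : E = ∑ i, a i ^ 2 := rfl
  have hE0 : 0 ≤ E := hE' ▸ Finset.sum_nonneg fun i _ => sq_nonneg (a i)
  set A : ℝ := ∑ i, a i with hA
  set R : ℂ := ∑ i, ∑ i' ∈ Finset.univ.erase i, (starRingEnd ℂ) (x i) * x i' * G i i' with hR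
  -- key expansion
  have key : ((∑ j, ‖Φ.mulVec x j‖ ^ 2 : ℝ) : ℂ)
      = ∑ i, ∑ i', (starRingEnd ℂ) (x i) * x i' * G i i' := by
    push_cast
    calc ∑ j, ((‖Φ.mulVec x j‖ : ℂ))^2
        = ∑ j, ∑ i, ∑ i', ((starRingEnd ℂ) (Φ j i) * Φ j i') * ((starRingEnd ℂ) (x i) * x i') := by
          refine Finset.sum_congr rfl fun j _ => ?_
          rw [conj_mul_self]
          simp only [Matrix.mulVec, dotProduct]
          rw [map_sum, Finset.sum_mul_sum]
          refine Finset.sum_congr rfl fun i _ => Finset.sum_congr rfl fun i' _ => ?_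
          rw [map_mul]; ring
      _ = ∑ i, ∑ i', (starRingEnd ℂ) (x i) * x i' * G i i' := by
          rw [Finset.sum_comm]
          refine Finset.sum_congr rfl fun i _ => ?_
          rw [Finset.sum_comm]
          refine Finset.sum_congr rfl fun i' _ => ?_
          rw [hG, Finset.mul_sum]
          exact Finset.sum_congr rfl fun j _ => by ring
  have hGdiag : ∀ i, G i i = 1 := by
    intro i
    show (∑ l, (starRingEnd ℂ) (Φ l i) * Φ l i) = 1
    have : (∑ l, (starRingEnd ℂ) (Φ l i) * Φ l i) = ((∑ l, ‖Φ l i‖ ^ 2 : ℝ) : ℂ) := by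
      push_cast
      exact Finset.sum_congr rfl fun l _ => (conj_mul_self _).symm
    rw [this, hunit i]; norm_num
  have split : ((∑ j, ‖Φ.mulVec x j‖ ^ 2 : ℝ) : ℂ) = (E : ℂ) + R := by
    rw [key, hR]
    have h1 : ∀ i : Fin N, ∑ i', (starRingEnd ℂ) (x i) * x i' * G i i'
        = (starRingEnd ℂ) (x i) * x i * G i i
          + ∑ i' ∈ Finset.univ.erase i, (starRingEnd ℂ) (x i) * x i' * G i i' :=
      fun i => (Finset.add_sum_erase _ _ (Finset.mem_univ i)).symm
    rw [Finset.sum_congr rfl fun i _ => h1 i, Finset.sum_add_distrib]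
    congr 1
    rw [hE]
    push_cast
    refine Finset.sum_congr rfl fun i _ => ?_
    rw [hGdiag, mul_one, conj_mul_self]
  -- real part
  have hT : (∑ j, ‖Φ.mulVec x j‖ ^ 2 : ℝ) = E + R.re := by
    have h := congrArg Complex.re split
    rwa [Complex.ofReal_re, Complex.add_re, Complex.ofReal_re] at h
  -- bound the off-diagonal term
  have hRnorm : ‖R‖ ≤ μ * (A ^ 2 - E) := by
    calc ‖R‖ ≤ ∑ i, ∑ i' ∈ Finset.univ.erase i, (a i * a i' * μ) := by
          refine (norm_sum_le _ _).trans (Finset.sum_le_sum fun i _ => ?_)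
          refine (norm_sum_le _ _).trans (Finset.sum_le_sum fun i' hi' => ?_)
          rw [norm_mul, norm_mul, RCLike.norm_conj]
          have hne : i ≠ i' := fun h => (Finset.mem_erase.1 hi').1 h.symm
          have : ‖G i i'‖ ≤ μ := hub ⟨i, i', hne, rfl⟩
          have := mul_le_mul_of_nonneg_left this (by positivity : (0:ℝ) ≤ ‖x i‖ * ‖x i'‖)
          simpa [ha, mul_assoc] using this
      _ = μ * (A ^ 2 - E) := by
          have h2 : ∀ i : Fin N, ∑ i' ∈ Finset.univ.erase i, (a i * a i' * μ)
              = a i * μ * A - a i * μ * a i := by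
            intro i
            have : ∑ i' ∈ Finset.univ.erase i, (a i * a i' * μ)
                = (a i * μ) * ∑ i' ∈ Finset.univ.erase i, a i' := by
              rw [Finset.mul_sum]
              exact Finset.sum_congr rfl fun _ _ => by ring
            rw [this, Finset.sum_erase_eq_sub (Finset.mem_univ i), ← hA]
            ring
          rw [Finset.sum_congr rfl fun i _ => h2 i, Finset.sum_sub_distrib, hE']
          have e1 : ∑ i : Fin N, a i * μ * A = A * μ * A := by
            rw [← Finset.sum_mul, ← Finset.sum_mul, ← hA]
          have e2 : ∑ i : Fin N, a i * μ * a i = μ * ∑ i, a i ^ 2 := by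
            rw [Finset.mul_sum]
            exact Finset.sum_congr rfl fun _ _ => by ring
          rw [e1, e2]; ring
  -- Cauchy-Schwarz
  have hA2 : A ^ 2 ≤ (k : ℝ) * E := by
    have hAS : A = ∑ i ∈ S, a i := by
      rw [hA]
      exact (Finset.sum_subset (Finset.subset_univ S) fun i _ hi => by
        simp [ha, hS i hi]).symm
    have h1 : (∑ i ∈ S, a i) ^ 2 ≤ S.card * ∑ i ∈ S, a i ^ 2 :=
      sq_sum_le_card_mul_sum_sq
    have h2 : ∑ i ∈ S, a i ^ 2 ≤ ∑ i, a i ^ 2 :=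
      Finset.sum_le_sum_of_subset_of_nonneg (Finset.subset_univ S)
        fun i _ _ => sq_nonneg _
    have h3 : (S.card : ℝ) ≤ k := by exact_mod_cast hScard
    calc A ^ 2 = (∑ i ∈ S, a i) ^ 2 := by rw [hAS]
      _ ≤ S.card * ∑ i ∈ S, a i ^ 2 := h1
      _ ≤ (k : ℝ) * ∑ i, a i ^ 2 :=
          mul_le_mul h3 h2 (Finset.sum_nonneg fun _ _ => sq_nonneg _) (Nat.cast_nonneg k)
      _ = (k : ℝ) * E := by rw [hE']
  have hfin : ‖R‖ ≤ ((k : ℝ) - 1) * μ * E := by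
    calc ‖R‖ ≤ μ * (A ^ 2 - E) := hRnorm
      _ ≤ μ * ((k : ℝ) * E - E) := by nlinarith
      _ = ((k : ℝ) - 1) * μ * E := by ring
  have hre : |R.re| ≤ ((k : ℝ) - 1) * μ * E :=
    (Complex.abs_re_le_norm R).trans (by exact hfin)
  obtain ⟨hl, hr⟩ := abs_le.1 hre
  rw [hT]
  constructor <;> linarith
end

section
/- Let Φ be an n×N matrix with unit column vectors that satisfies the RIP of order m with parameter ε. Then for every k ≥ m, Φ satisfies the RIP of order k with parameter δ = ε(k−1)/(m−1). -/
open Finset Complex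

variable {n N : ℕ}

noncomputable def Bmat (Φ : Matrix (Fin n) (Fin N) ℂ) (i j : Fin N) : ℂ :=
  ∑ a, Φ a i * (starRingEnd ℂ) (Φ a j)

noncomputable def fq (Φ : Matrix (Fin n) (Fin N) ℂ) (x : Fin N → ℂ) (i j : Fin N) : ℝ :=
  (x i * (starRingEnd ℂ) (x j) * Bmat Φ i j).re

lemma expand_univ (Φ : Matrix (Fin n) (Fin N) ℂ) (x : Fin N → ℂ) :
    ∑ a, ‖Φ.mulVec x a‖ ^ 2 = ∑ i, ∑ j, fq Φ x i j := by
  have h1 : ∀ z : ℂ, ‖z‖ ^ 2 = (z * (starRingEnd ℂ) z).re := by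
    intro z
    rw [Complex.mul_conj]
    simp [Complex.normSq_eq_norm_sq, ← Complex.ofReal_pow]
  calc ∑ a, ‖Φ.mulVec x a‖ ^ 2
      = ∑ a, (Φ.mulVec x a * (starRingEnd ℂ) (Φ.mulVec x a)).re := by
        simp_rw [h1]
    _ = ∑ i, ∑ j, fq Φ x i j := by
        unfold fq Bmat
        simp_rw [Matrix.mulVec, dotProduct, map_sum, Finset.sum_mul_sum,
          Complex.re_sum, Finset.mul_sum, Complex.re_sum]
        rw [Finset.sum_comm]
        congr 1; ext i
        rw [Finset.sum_comm]
        congr 1; ext j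
        congr 1; ext a
        ring_nf
        rw [map_mul]
        ring_nf

noncomputable def Off (Φ : Matrix (Fin n) (Fin N) ℂ) (x : Fin N → ℂ) (S : Finset (Fin N)) : ℝ :=
  ∑ i ∈ S, ∑ j ∈ S.erase i, fq Φ x i j

lemma fq_zero_left (Φ : Matrix (Fin n) (Fin N) ℂ) (x : Fin N → ℂ) {i : Fin N} (j : Fin N)
    (h : x i = 0) : fq Φ x i j = 0 := by simp [fq, h]

lemma fq_zero_right (Φ : Matrix (Fin n) (Fin N) ℂ) (x : Fin N → ℂ) (i : Fin N) {j : Fin N}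
    (h : x j = 0) : fq Φ x i j = 0 := by simp [fq, h]

lemma fq_diag (Φ : Matrix (Fin n) (Fin N) ℂ) (hunit : ∀ j, ∑ i, ‖Φ i j‖ ^ 2 = 1)
    (x : Fin N → ℂ) (i : Fin N) : fq Φ x i i = ‖x i‖ ^ 2 := by
  have hB : Bmat Φ i i = 1 := by
    unfold Bmat
    have : ∀ a, Φ a i * (starRingEnd ℂ) (Φ a i) = ((‖Φ a i‖ ^ 2 : ℝ) : ℂ) := by
      intro a
      rw [Complex.mul_conj]
      simp [Complex.normSq_eq_norm_sq, ← Complex.ofReal_pow]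
    simp_rw [this, ← Complex.ofReal_sum, hunit i, Complex.ofReal_one]
  unfold fq
  rw [hB, mul_one, Complex.mul_conj]
  simp [Complex.normSq_eq_norm_sq, ← Complex.ofReal_pow]

lemma expand_supp (Φ : Matrix (Fin n) (Fin N) ℂ) (hunit : ∀ j, ∑ i, ‖Φ i j‖ ^ 2 = 1)
    (x : Fin N → ℂ) (S : Finset (Fin N)) (hS : ∀ i ∉ S, x i = 0) :
    ∑ a, ‖Φ.mulVec x a‖ ^ 2 = ∑ i, ‖x i‖ ^ 2 + Off Φ x S := by
  rw [expand_univ]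
  have h1 : ∑ i, ∑ j, fq Φ x i j = ∑ i ∈ S, ∑ j ∈ S, fq Φ x i j := by
    rw [← Finset.sum_subset (Finset.subset_univ S)
      (fun i _ hi => by
        apply Finset.sum_eq_zero
        intro j _; exact fq_zero_left Φ x j (hS i hi))]
    congr 1; ext i
    rw [← Finset.sum_subset (Finset.subset_univ S)
      (fun j _ hj => fq_zero_right Φ x i (hS j hj))]
  have h2 : ∑ i, ‖x i‖ ^ 2 = ∑ i ∈ S, ‖x i‖ ^ 2 := by
    rw [← Finset.sum_subset (Finset.subset_univ S)
      (fun i _ hi => by simp [hS i hi])]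
  rw [h1, h2, Off, ← Finset.sum_add_distrib]
  apply Finset.sum_congr rfl
  intro i hi
  rw [← fq_diag Φ hunit x i, add_comm, Finset.sum_erase_add _ _ hi]

lemma off_bound (Φ : Matrix (Fin n) (Fin N) ℂ) (m : ℕ) (ε : ℝ)
    (hunit : ∀ j, ∑ i, ‖Φ i j‖ ^ 2 = 1) (hRIP : RIP Φ m ε)
    (x : Fin N → ℂ) (T : Finset (Fin N)) (hT : T.card ≤ m) :
    |Off Φ x T| ≤ ε * ∑ i ∈ T, ‖x i‖ ^ 2 := by
  classical
  set y : Fin N → ℂ := fun i => if i ∈ T then x i else 0 with hy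
  have hsupp : ∀ i ∉ T, y i = 0 := fun i hi => by simp [hy, hi]
  have hsp : Sparse m y := ⟨T, hT, hsupp⟩
  have hE : ∑ i, ‖y i‖ ^ 2 = ∑ i ∈ T, ‖x i‖ ^ 2 := by
    rw [← Finset.sum_subset (Finset.subset_univ T) (fun i _ hi => by simp [hsupp i hi])]
    apply Finset.sum_congr rfl
    intro i hi; simp [hy, hi]
  have hOff : Off Φ y T = Off Φ x T := by
    unfold Off
    apply Finset.sum_congr rfl
    intro i hi
    apply Finset.sum_congr rfl
    intro j hj
    have hjT : j ∈ T := Finset.mem_of_mem_erase hj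
    simp [fq, hy, hi, hjT]
  have hexp := expand_supp Φ hunit y T hsupp
  obtain ⟨hlo, hhi⟩ := hRIP y hsp
  rw [hexp, hE] at hlo hhi
  rw [abs_le, ← hOff]
  constructor <;> nlinarith

lemma count_one {α : Type*} [DecidableEq α] (S : Finset α) (m : ℕ) (hm : 1 ≤ m)
    {i : α} (hi : i ∈ S) :
    ((S.powersetCard m).filter (fun T => i ∈ T)).card = (S.card - 1).choose (m - 1) := by
  rw [← Finset.card_erase_of_mem hi, ← Finset.card_powersetCard]
  refine Finset.card_bij' (fun T _ => T.erase i) (fun T _ => insert i T) ?_ ?_ ?_ ?_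
  · intro T hT
    simp only [Finset.mem_filter, Finset.mem_powersetCard] at hT
    obtain ⟨⟨hsub, hcard⟩, hiT⟩ := hT
    simp only [Finset.mem_powersetCard]
    constructor
    · intro a ha
      have := Finset.mem_of_mem_erase ha
      exact Finset.mem_erase.mpr ⟨Finset.ne_of_mem_erase ha, hsub this⟩
    · rw [Finset.card_erase_of_mem hiT, hcard]
  · intro T hT
    simp only [Finset.mem_powersetCard] at hT
    obtain ⟨hsub, hcard⟩ := hT
    have hiT : i ∉ T := fun h => (Finset.mem_erase.mp (hsub h)).1 rfl
    simp only [Finset.mem_filter, Finset.mem_powersetCard]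
    refine ⟨⟨?_, ?_⟩, Finset.mem_insert_self i T⟩
    · intro a ha
      rcases Finset.mem_insert.mp ha with rfl | h
      · exact hi
      · exact Finset.mem_of_mem_erase (hsub h)
    · rw [Finset.card_insert_of_notMem hiT, hcard]
      omega
  · intro T hT
    simp only [Finset.mem_filter] at hT
    exact Finset.insert_erase hT.2
  · intro T hT
    simp only [Finset.mem_powersetCard] at hT
    have hiT : i ∉ T := fun h => (Finset.mem_erase.mp (hT.1 h)).1 rfl
    exact Finset.erase_insert hiT

lemma count_two {α : Type*} [DecidableEq α] (S : Finset α) (m : ℕ) (hm : 2 ≤ m)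
    {i j : α} (hi : i ∈ S) (hj : j ∈ S) (hij : i ≠ j) :
    ((S.powersetCard m).filter (fun T => i ∈ T ∧ j ∈ T)).card
      = (S.card - 2).choose (m - 2) := by
  have hcard2 : ((S.erase i).erase j).card = S.card - 2 := by
    rw [Finset.card_erase_of_mem (Finset.mem_erase.mpr ⟨hij.symm, hj⟩),
      Finset.card_erase_of_mem hi]
    omega
  rw [← hcard2, ← Finset.card_powersetCard]
  refine Finset.card_bij' (fun T _ => (T.erase i).erase j) (fun T _ => insert i (insert j T))
    ?_ ?_ ?_ ?_
  · intro T hT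
    simp only [Finset.mem_filter, Finset.mem_powersetCard] at hT
    obtain ⟨⟨hsub, hcard⟩, hiT, hjT⟩ := hT
    simp only [Finset.mem_powersetCard]
    constructor
    · intro a ha
      have ha1 := Finset.mem_of_mem_erase ha
      have ha2 := Finset.mem_of_mem_erase ha1
      exact Finset.mem_erase.mpr ⟨Finset.ne_of_mem_erase ha,
        Finset.mem_erase.mpr ⟨Finset.ne_of_mem_erase ha1, hsub ha2⟩⟩
    · rw [Finset.card_erase_of_mem (Finset.mem_erase.mpr ⟨hij.symm, hjT⟩),
        Finset.card_erase_of_mem hiT, hcard]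
      omega
  · intro T hT
    simp only [Finset.mem_powersetCard] at hT
    obtain ⟨hsub, hcard⟩ := hT
    have hjT : j ∉ T := fun h => (Finset.mem_erase.mp (hsub h)).1 rfl
    have hiT : i ∉ insert j T := by
      intro h
      rcases Finset.mem_insert.mp h with rfl | h
      · exact hij rfl
      · exact (Finset.mem_erase.mp (Finset.mem_of_mem_erase (hsub h))).1 rfl
    simp only [Finset.mem_filter, Finset.mem_powersetCard]
    refine ⟨⟨?_, ?_⟩, Finset.mem_insert_self i _,
      Finset.mem_insert_of_mem (Finset.mem_insert_self j T)⟩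
    · intro a ha
      rcases Finset.mem_insert.mp ha with rfl | h
      · exact hi
      rcases Finset.mem_insert.mp h with rfl | h
      · exact hj
      · exact Finset.mem_of_mem_erase (Finset.mem_of_mem_erase (hsub h))
    · rw [Finset.card_insert_of_notMem hiT, Finset.card_insert_of_notMem hjT, hcard]
      omega
  · intro T hT
    simp only [Finset.mem_filter] at hT
    obtain ⟨_, hiT, hjT⟩ := hT
    show insert i (insert j ((T.erase i).erase j)) = T
    rw [Finset.insert_erase (Finset.mem_erase.mpr ⟨hij.symm, hjT⟩), Finset.insert_erase hiT]
  · intro T hT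
    simp only [Finset.mem_powersetCard] at hT
    have hjT : j ∉ T := fun h => (Finset.mem_erase.mp (hT.1 h)).1 rfl
    have hiT : i ∉ insert j T := by
      intro h
      rcases Finset.mem_insert.mp h with rfl | h
      · exact hij rfl
      · exact (Finset.mem_erase.mp (Finset.mem_of_mem_erase (hT.1 h))).1 rfl
    show ((insert i (insert j T)).erase i).erase j = T
    rw [Finset.erase_insert hiT, Finset.erase_insert hjT]

lemma sum_ite_card {β : Type*} (A : Finset β) (p : β → Prop)
    [DecidablePred p] (c : ℝ) :
    ∑ T ∈ A, (if p T then c else 0) = ((A.filter p).card : ℝ) * c := by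
  rw [← Finset.sum_filter]
  simp [Finset.sum_const, nsmul_eq_mul]

lemma avg_norm (x : Fin N → ℂ) (S : Finset (Fin N)) (m : ℕ) (hm : 1 ≤ m) :
    ∑ T ∈ S.powersetCard m, ∑ i ∈ T, ‖x i‖ ^ 2
      = ((S.card - 1).choose (m - 1) : ℝ) * ∑ i ∈ S, ‖x i‖ ^ 2 := by
  classical
  have h : ∀ T ∈ S.powersetCard m, ∑ i ∈ T, ‖x i‖ ^ 2
      = ∑ i ∈ S, if i ∈ T then ‖x i‖ ^ 2 else 0 := by
    intro T hT
    have hTS : T ⊆ S := (Finset.mem_powersetCard.mp hT).1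
    rw [Finset.sum_ite_mem, Finset.inter_comm, Finset.inter_eq_left.mpr hTS]
  rw [Finset.sum_congr rfl h, Finset.sum_comm, Finset.mul_sum]
  apply Finset.sum_congr rfl
  intro i hi
  rw [sum_ite_card, count_one S m hm hi]

lemma off_subset (Φ : Matrix (Fin n) (Fin N) ℂ) (x : Fin N → ℂ)
    (S T : Finset (Fin N)) (hTS : T ⊆ S) :
    Off Φ x T = ∑ i ∈ S, ∑ j ∈ S.erase i, (if i ∈ T ∧ j ∈ T then fq Φ x i j else 0) := by
  classical
  unfold Off
  rw [← Finset.sum_subset hTS (fun i _ hiT => Finset.sum_eq_zero (fun j _ => by simp [hiT]))]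
  apply Finset.sum_congr rfl
  intro i hiT
  have herase : T.erase i ⊆ S.erase i := Finset.erase_subset_erase i hTS
  rw [← Finset.sum_subset herase (fun j hjS hjT => by
    have : j ∉ T := fun h => hjT (Finset.mem_erase.mpr ⟨(Finset.mem_erase.mp hjS).1, h⟩)
    simp [this])]
  apply Finset.sum_congr rfl
  intro j hj
  simp [hiT, Finset.mem_of_mem_erase hj]

lemma avg_off (Φ : Matrix (Fin n) (Fin N) ℂ) (x : Fin N → ℂ) (S : Finset (Fin N))
    (m : ℕ) (hm : 2 ≤ m) :
    ∑ T ∈ S.powersetCard m, Off Φ x T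
      = ((S.card - 2).choose (m - 2) : ℝ) * Off Φ x S := by
  classical
  have h : ∀ T ∈ S.powersetCard m, Off Φ x T
      = ∑ i ∈ S, ∑ j ∈ S.erase i, (if i ∈ T ∧ j ∈ T then fq Φ x i j else 0) :=
    fun T hT => off_subset Φ x S T (Finset.mem_powersetCard.mp hT).1
  rw [Finset.sum_congr rfl h, Finset.sum_comm, Off, Finset.mul_sum]
  apply Finset.sum_congr rfl
  intro i hi
  rw [Finset.sum_comm, Finset.mul_sum]
  apply Finset.sum_congr rfl
  intro j hj
  rw [sum_ite_card, count_two S m hm hi (Finset.mem_of_mem_erase hj)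
    (Ne.symm (Finset.mem_erase.mp hj).1)]

lemma eps_nonneg (Φ : Matrix (Fin n) (Fin N) ℂ) (m : ℕ) (ε : ℝ) (hN : 0 < N) (hm : 1 ≤ m)
    (hunit : ∀ j, ∑ i, ‖Φ i j‖ ^ 2 = 1) (hRIP : RIP Φ m ε) : 0 ≤ ε := by
  classical
  set i0 : Fin N := ⟨0, hN⟩ with hi0
  set x : Fin N → ℂ := fun i => if i = i0 then 1 else 0 with hx
  have hsp : Sparse m x := ⟨{i0}, by simpa using hm, fun i hi => by
    simp only [Finset.mem_singleton] at hi; simp [hx, hi]⟩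
  have hE : ∑ i, ‖x i‖ ^ 2 = 1 := by
    rw [Finset.sum_eq_single i0] <;> simp [hx]
  have hP : ∑ a, ‖Φ.mulVec x a‖ ^ 2 = 1 := by
    have h : ∀ a, Φ.mulVec x a = Φ a i0 := by
      intro a
      simp only [Matrix.mulVec, dotProduct, hx]
      rw [Finset.sum_eq_single i0] <;> simp
      intro b hb; simp [hb]
    simp_rw [h]; exact hunit i0
  have h2 := (hRIP x hsp).2
  rw [hP, hE] at h2
  linarith

lemma key (Φ : Matrix (Fin n) (Fin N) ℂ) (m k : ℕ) (ε : ℝ)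
    (hunit : ∀ j, ∑ i, ‖Φ i j‖ ^ 2 = 1)
    (hm : 2 ≤ m) (hk : m ≤ k) (hRIP : RIP Φ m ε) (hε : 0 ≤ ε)
    (x : Fin N → ℂ) (S : Finset (Fin N)) (hScard : S.card ≤ k) :
    |Off Φ x S| ≤ ε * ((k : ℝ) - 1) / ((m : ℝ) - 1) * ∑ i ∈ S, ‖x i‖ ^ 2 := by
  classical
  have hm1 : (0:ℝ) < (m:ℝ) - 1 := by
    have : (2:ℝ) ≤ (m:ℝ) := by exact_mod_cast hm
    linarith
  have hE0 : (0:ℝ) ≤ ∑ i ∈ S, ‖x i‖ ^ 2 :=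
    Finset.sum_nonneg fun i _ => by positivity
  have hratio : (1:ℝ) ≤ ((k : ℝ) - 1) / ((m : ℝ) - 1) := by
    rw [le_div_iff₀ hm1]
    have : (m:ℝ) ≤ (k:ℝ) := by exact_mod_cast hk
    linarith
  by_cases hcase : S.card ≤ m
  · calc |Off Φ x S| ≤ ε * ∑ i ∈ S, ‖x i‖ ^ 2 := off_bound Φ m ε hunit hRIP x S hcase
      _ ≤ ε * ((k : ℝ) - 1) / ((m : ℝ) - 1) * ∑ i ∈ S, ‖x i‖ ^ 2 := by
        rw [mul_div_assoc]
        apply mul_le_mul_of_nonneg_right _ hE0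
        nlinarith
  · push_neg at hcase
    set s := S.card with hs
    have hms : m ≤ s := le_of_lt hcase
    -- choose identities
    have hC2pos : 0 < (s - 2).choose (m - 2) := Nat.choose_pos (by omega)
    have hid : (s - 1) * (s - 2).choose (m - 2) = (s - 1).choose (m - 1) * (m - 1) := by
      have h := Nat.add_one_mul_choose_eq (s - 2) (m - 2)
      have e1 : s - 2 + 1 = s - 1 := by omega
      have e2 : m - 2 + 1 = m - 1 := by omega
      rw [e1, e2] at h
      exact h
    have havg := avg_off Φ x S m hm
    have hbound : |∑ T ∈ S.powersetCard m, Off Φ x T|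
        ≤ ε * (((s - 1).choose (m - 1) : ℝ) * ∑ i ∈ S, ‖x i‖ ^ 2) := by
      calc |∑ T ∈ S.powersetCard m, Off Φ x T|
          ≤ ∑ T ∈ S.powersetCard m, |Off Φ x T| := Finset.abs_sum_le_sum_abs _ _
        _ ≤ ∑ T ∈ S.powersetCard m, ε * ∑ i ∈ T, ‖x i‖ ^ 2 := by
            apply Finset.sum_le_sum
            intro T hT
            exact off_bound Φ m ε hunit hRIP x T
              (le_of_eq (Finset.mem_powersetCard.mp hT).2)
        _ = ε * (((s - 1).choose (m - 1) : ℝ) * ∑ i ∈ S, ‖x i‖ ^ 2) := by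
            rw [← Finset.mul_sum, avg_norm x S m (by omega)]
    rw [havg, abs_mul, _root_.abs_of_nonneg (by positivity : (0:ℝ) ≤ ((s - 2).choose (m - 2) : ℝ))]
      at hbound
    -- now: C2 * |Off S| ≤ ε * (C1 * E)
    set a := |Off Φ x S| with ha
    set E := ∑ i ∈ S, ‖x i‖ ^ 2 with hEdef
    set c2 : ℝ := ((s - 2).choose (m - 2) : ℝ) with hc2
    set c1 : ℝ := ((s - 1).choose (m - 1) : ℝ) with hc1
    have hc2pos : (0:ℝ) < c2 := by rw [hc2]; exact_mod_cast hC2pos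
    have hidR : ((s:ℝ) - 1) * c2 = c1 * ((m:ℝ) - 1) := by
      have := hid
      have h1 : ((s:ℝ) - 1) = ((s - 1 : ℕ) : ℝ) := by
        push_cast [Nat.cast_sub (by omega : 1 ≤ s)]; ring
      have h2 : ((m:ℝ) - 1) = ((m - 1 : ℕ) : ℝ) := by
        push_cast [Nat.cast_sub (by omega : 1 ≤ m)]; ring
      rw [h1, h2, hc2, hc1]
      exact_mod_cast this
    have hsk : (s:ℝ) ≤ (k:ℝ) := by exact_mod_cast hScard
    have ha0 : 0 ≤ a := abs_nonneg _
    -- goal : a ≤ ε * ((k:ℝ)-1)/((m:ℝ)-1) * E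
    rw [div_mul_eq_mul_div, le_div_iff₀ hm1]
    -- a * (m-1) ≤ ε * (k-1) * E
    have step : c2 * (a * ((m:ℝ) - 1)) ≤ c2 * (ε * ((k:ℝ) - 1) * E) := by
      calc c2 * (a * ((m:ℝ) - 1)) = (c2 * a) * ((m:ℝ) - 1) := by ring
        _ ≤ (ε * (c1 * E)) * ((m:ℝ) - 1) := by
            apply mul_le_mul_of_nonneg_right hbound (le_of_lt hm1)
        _ = (ε * E) * (c1 * ((m:ℝ) - 1)) := by ring
        _ = (ε * E) * (((s:ℝ) - 1) * c2) := by rw [hidR]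
        _ ≤ (ε * E) * (((k:ℝ) - 1) * c2) := by
            apply mul_le_mul_of_nonneg_left _ (by positivity)
            apply mul_le_mul_of_nonneg_right _ (le_of_lt hc2pos)
            linarith
        _ = c2 * (ε * ((k:ℝ) - 1) * E) := by ring
    exact le_of_mul_le_mul_left step hc2pos

theorem stmt1 (n N : ℕ) (Φ : Matrix (Fin n) (Fin N) ℂ) (m k : ℕ) (ε : ℝ)
    (hunit : ∀ j, ∑ i, ‖Φ i j‖ ^ 2 = 1)
    (hm : 2 ≤ m) (hk : m ≤ k)
    (hRIP : RIP Φ m ε) :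
    RIP Φ k (ε * ((k : ℝ) - 1) / ((m : ℝ) - 1)) := by
  rcases Nat.eq_zero_or_pos N with hN | hN
  · subst hN
    intro x _
    simp [Matrix.mulVec, dotProduct]
  intro x ⟨S, hScard, hSsupp⟩
  have hε : 0 ≤ ε := eps_nonneg Φ m ε hN (by omega) hunit hRIP
  have hkey := key Φ m k ε hunit hm hk hRIP hε x S hScard
  have hexp := expand_supp Φ hunit x S hSsupp
  have hES : ∑ i ∈ S, ‖x i‖ ^ 2 = ∑ i, ‖x i‖ ^ 2 := by
    rw [← Finset.sum_subset (Finset.subset_univ S) (fun i _ hi => by simp [hSsupp i hi])]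
  rw [hES] at hkey
  rw [abs_le] at hkey
  constructor <;> [linarith [hkey.1]; linarith [hkey.2]]
end
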